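/- For homogeneous polynomials f, g of degree d in n variables over ℝ, and an orthogonal matrix U ∈ O(n), the Bombieri–Weyl inner product satisfies ⟨f ∘ U⁻¹, g ∘ U⁻¹⟩ = ⟨f, g⟩. -/

import Mathlib

open MvPolynomial Finset

/-- The Bombieri–Weyl inner product on real polynomials in `n` variables:
writing `f = ∑ a_α √(d choose α) X^α`, `g = ∑ b_α √(d choose α) X^α`, it is
`⟨f, g⟩ = ∑_α a_α b_α = ∑_α (coeff α f)(coeff α g)/(d choose α)`. -/
noncomputable def bombieriWeyl {n : ℕ} (f g : MvPolynomial (Fin n) ℝ) : ℝ :=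
  ∑ α ∈ f.support ∪ g.support,
    f.coeff α * g.coeff α / (Nat.multinomial α.support α : ℝ)

/-- The substitution `f ∘ U⁻¹` of the linear change of variables given by `U⁻¹`. -/
noncomputable def compMatrix {n : ℕ} (M : Matrix (Fin n) (Fin n) ℝ)
    (f : MvPolynomial (Fin n) ℝ) : MvPolynomial (Fin n) ℝ :=
  aeval (fun i => ∑ j, C (M i j) * X j) f

set_option synthInstance.maxHeartbeats 1000000
set_option maxHeartbeats 1000000

namespace BWaux

variable {n : ℕ}

/-- partial derivative as a module endomorphism -/
noncomputable def pdE (i : Fin n) : Module.End ℝ (MvPolynomial (Fin n) ℝ) :=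
  (pderiv i).toLinearMap

lemma pdE_apply (i : Fin n) (p : MvPolynomial (Fin n) ℝ) : pdE i p = pderiv i p := rfl

lemma pderiv_comm (i j : Fin n) (p : MvPolynomial (Fin n) ℝ) :
    pderiv i (pderiv j p) = pderiv j (pderiv i p) := by
  induction p using MvPolynomial.induction_on' with
  | monomial α a =>
    simp only [pderiv_monomial]
    rw [monomial_eq_monomial_iff]
    left
    constructor
    · rw [tsub_tsub, tsub_tsub, add_comm]
    · rcases eq_or_ne i j with rfl | hij
      · ring_nf
      · rw [Finsupp.tsub_apply, Finsupp.tsub_apply,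
          Finsupp.single_eq_of_ne hij, Finsupp.single_eq_of_ne (Ne.symm hij)]
        simp only [Nat.sub_zero]
        push_cast
        ring
  | add p q hp hq => simp [hp, hq]

lemma pdE_comm : ∀ a ∈ Set.range (pdE (n := n)), ∀ b ∈ Set.range (pdE (n := n)), a * b = b * a := by
  rintro _ ⟨i, rfl⟩ _ ⟨j, rfl⟩
  refine LinearMap.ext fun p => ?_
  simp only [Module.End.mul_apply, pdE_apply]
  exact pderiv_comm i j p

/-- the commutative subalgebra generated by the partial derivatives -/
noncomputable abbrev PDAlg (n : ℕ) : Subalgebra ℝ (Module.End ℝ (MvPolynomial (Fin n) ℝ)) :=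
  Algebra.adjoin ℝ (Set.range (pdE (n := n)))

noncomputable instance : CommSemiring (PDAlg n) :=
  Algebra.adjoinCommSemiringOfComm ℝ pdE_comm

/-- `pdA i` : the `i`-th partial derivative as an element of the commutative algebra -/
noncomputable def pdA (i : Fin n) : PDAlg n :=
  ⟨pdE i, Algebra.subset_adjoin ⟨i, rfl⟩⟩

/-- the "f(∂)" algebra morphism -/
noncomputable def apolarOp : MvPolynomial (Fin n) ℝ →ₐ[ℝ] PDAlg n :=
  aeval pdA

/-- the apolar pairing `f(∂) g` -/
noncomputable def apolar (f g : MvPolynomial (Fin n) ℝ) : MvPolynomial (Fin n) ℝ :=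
  (apolarOp f : Module.End ℝ (MvPolynomial (Fin n) ℝ)) g


lemma pdE_pow_monomial (i : Fin n) (k : ℕ) (β : Fin n →₀ ℕ) (b : ℝ) :
    (pdE i ^ k) (monomial β b) =
      monomial (β - Finsupp.single i k) (b * (β i).descFactorial k) := by
  induction k with
  | zero => simp
  | succ k ih =>
    rw [pow_succ', Module.End.mul_apply, ih, pdE_apply, pderiv_monomial]
    rw [monomial_eq_monomial_iff]
    left
    constructor
    · rw [tsub_tsub, ← Finsupp.single_add]
    · rw [Finsupp.tsub_apply, Finsupp.single_eq_same, Nat.descFactorial_succ]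
      push_cast [Nat.cast_sub]
      ring

/-- the product of iterated partial derivatives `∂^α` -/
noncomputable def pdP (α : Fin n →₀ ℕ) : PDAlg n :=
  α.prod fun i k => pdA i ^ k

lemma pdP_monomial (α β : Fin n →₀ ℕ) (b : ℝ) :
    ((pdP α : Module.End ℝ (MvPolynomial (Fin n) ℝ))) (monomial β b) =
      monomial (β - α) (b * α.prod fun i k => ((β i).descFactorial k : ℝ)) := by
  induction α using Finsupp.induction with
  | zero => simp [pdP]
  | single_add i m α' hi hm ih =>
    have hdis : Disjoint (Finsupp.single i m).support α'.support := by
      rw [Finsupp.support_single_ne_zero i hm]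
      simpa using hi
    have h1 : pdP (Finsupp.single i m + α') = pdA i ^ m * pdP α' := by
      rw [pdP, Finsupp.prod_add_index_of_disjoint hdis]
      exact congrArg (· * _) (Finsupp.prod_single_index (pow_zero _))
    rw [h1]
    have : ((pdA i ^ m * pdP α' : PDAlg n) : Module.End ℝ (MvPolynomial (Fin n) ℝ))
        = (pdA i : Module.End ℝ _) ^ m * (pdP α' : Module.End ℝ _) := by
      push_cast
      rfl
    rw [this, Module.End.mul_apply, ih]
    show (pdE i ^ m) _ = _
    rw [pdE_pow_monomial]
    rw [monomial_eq_monomial_iff]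
    left
    constructor
    · rw [tsub_tsub, add_comm α' (Finsupp.single i m)]
    · rw [Finsupp.prod_add_index_of_disjoint hdis, Finsupp.prod_single_index (by simp)]
      rw [Finsupp.tsub_apply, Finsupp.notMem_support_iff.mp hi, tsub_zero]
      ring

lemma eq_of_le_of_degree_eq {α β : Fin n →₀ ℕ} (h : α ≤ β)
    (hd : Finsupp.degree α = Finsupp.degree β) : α = β := by
  obtain ⟨c, rfl⟩ := le_iff_exists_add.mp h
  have : Finsupp.degree c = 0 := by
    rw [Finsupp.degree_eq_weight_one, map_add] at hd
    rw [Finsupp.degree_eq_weight_one]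
    omega
  rw [Finsupp.degree_eq_zero_iff] at this
  rw [this, add_zero]

lemma constantCoeff_pdP (α β : Fin n →₀ ℕ) (b : ℝ)
    (hd : Finsupp.degree α = Finsupp.degree β) :
    constantCoeff ((pdP α : Module.End ℝ (MvPolynomial (Fin n) ℝ)) (monomial β b)) =
      if α = β then b * α.prod (fun _ k => (k.factorial : ℝ)) else 0 := by
  classical
  rw [pdP_monomial, constantCoeff_monomial]
  rcases eq_or_ne α β with rfl | hne
  · simp only [tsub_self, if_pos rfl, if_pos rfl]
    have he : α.prod (fun i k => ((α i).descFactorial k : ℝ))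
        = α.prod fun _ k => (k.factorial : ℝ) :=
      Finsupp.prod_congr fun i _ => by rw [Nat.descFactorial_self]
    rw [he]
  · rw [if_neg hne, if_neg]
    intro h0
    exact hne (eq_of_le_of_degree_eq (tsub_eq_zero_iff_le.mp h0) hd.symm).symm

lemma degree_eq_of_mem {f : MvPolynomial (Fin n) ℝ} {d : ℕ}
    (hf : f.IsHomogeneous d) {α : Fin n →₀ ℕ} (h : coeff α f ≠ 0) :
    Finsupp.degree α = d := by
  rw [Finsupp.degree_eq_weight_one]
  exact hf h

lemma apolar_monomial (α : Fin n →₀ ℕ) (a : ℝ) (p : MvPolynomial (Fin n) ℝ) :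
    apolar (monomial α a) p = a • ((pdP α : Module.End ℝ (MvPolynomial (Fin n) ℝ)) p) := by
  rw [apolar, apolarOp, aeval_monomial]
  show ((algebraMap ℝ (PDAlg n) a * pdP α : PDAlg n) :
    Module.End ℝ (MvPolynomial (Fin n) ℝ)) p = _
  push_cast
  rw [Module.End.mul_apply]
  simp [Module.algebraMap_end_apply]

lemma constantCoeff_apolar {d : ℕ} (f g : MvPolynomial (Fin n) ℝ)
    (hf : f.IsHomogeneous d) (hg : g.IsHomogeneous d) :
    constantCoeff (apolar f g) =
      ∑ α ∈ f.support ∪ g.support,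
        coeff α f * coeff α g * α.prod (fun _ k => (k.factorial : ℝ)) := by
  classical
  have hsl : ∀ (s : Finset (Fin n →₀ ℕ)) (F : (Fin n →₀ ℕ) → MvPolynomial (Fin n) ℝ)
      (p : MvPolynomial (Fin n) ℝ),
      apolar (∑ a ∈ s, F a) p = ∑ a ∈ s, apolar (F a) p := by
    intro s F p
    rw [apolar, map_sum]
    rw [show ((((∑ a ∈ s, apolarOp (F a)) : PDAlg n)) :
        Module.End ℝ (MvPolynomial (Fin n) ℝ))
      = ∑ a ∈ s, ((apolarOp (F a) : PDAlg n) :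
        Module.End ℝ (MvPolynomial (Fin n) ℝ)) by push_cast; rfl]
    rw [LinearMap.sum_apply]
    rfl
  have hexp : apolar f g = ∑ α ∈ f.support, ∑ β ∈ g.support,
      coeff α f • ((pdP α : Module.End ℝ (MvPolynomial (Fin n) ℝ))
        (monomial β (coeff β g))) := by
    conv_lhs => rw [f.as_sum]
    rw [hsl]
    refine Finset.sum_congr rfl fun α hα => ?_
    rw [apolar_monomial]
    conv_lhs => rw [g.as_sum]
    rw [map_sum, Finset.smul_sum]
  rw [hexp, map_sum]
  have hstep : ∀ α ∈ f.support,
      constantCoeff (∑ β ∈ g.support, coeff α f •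
        ((pdP α : Module.End ℝ (MvPolynomial (Fin n) ℝ)) (monomial β (coeff β g))))
      = if α ∈ g.support then
          coeff α f * coeff α g * α.prod (fun _ k => (k.factorial : ℝ)) else 0 := by
    intro α hα
    rw [map_sum]
    have : ∀ β ∈ g.support,
        constantCoeff (coeff α f •
          ((pdP α : Module.End ℝ (MvPolynomial (Fin n) ℝ)) (monomial β (coeff β g))))
        = if α = β then coeff α f * coeff β g * α.prod (fun _ k => (k.factorial : ℝ))
          else 0 := by
      intro β hβ
      rw [smul_eq_C_mul, map_mul, constantCoeff_C, constantCoeff_pdP α β _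
        (by rw [degree_eq_of_mem hf (mem_support_iff.mp hα),
                degree_eq_of_mem hg (mem_support_iff.mp hβ)])]
      split_ifs with h
      · ring
      · ring
    rw [Finset.sum_congr rfl this, Finset.sum_ite_eq]
  rw [Finset.sum_congr rfl hstep, Finset.sum_ite_mem, Finset.sum_subset
    (Finset.inter_subset_union)]
  intro α hαu hαi
  rcases Finset.mem_union.mp hαu with h | h
  · have : coeff α g = 0 := by
      by_contra hc
      exact hαi (Finset.mem_inter.mpr ⟨h, mem_support_iff.mpr hc⟩)
    rw [this]; ring
  · have : coeff α f = 0 := by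
      by_contra hc
      exact hαi (Finset.mem_inter.mpr ⟨mem_support_iff.mpr hc, h⟩)
    rw [this]; ring

lemma apolar_C (a : ℝ) (p : MvPolynomial (Fin n) ℝ) : apolar (C a) p = a • p := by
  have : (C a : MvPolynomial (Fin n) ℝ) = monomial 0 a := by simp [monomial_zero']
  rw [this, apolar_monomial]
  have : pdP (0 : Fin n →₀ ℕ) = 1 := by simp [pdP]
  rw [this]
  rfl

lemma apolar_X (i : Fin n) (p : MvPolynomial (Fin n) ℝ) :
    apolar (X i) p = pderiv i p := by
  rw [apolar, apolarOp, aeval_X]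
  rfl

lemma apolar_mul (p q r : MvPolynomial (Fin n) ℝ) :
    apolar (p * q) r = apolar p (apolar q r) := by
  rw [apolar, apolar, apolar, map_mul]
  rw [show (((apolarOp p * apolarOp q : PDAlg n)) :
      Module.End ℝ (MvPolynomial (Fin n) ℝ))
    = (apolarOp p : Module.End ℝ (MvPolynomial (Fin n) ℝ)) *
      (apolarOp q : Module.End ℝ (MvPolynomial (Fin n) ℝ)) by push_cast; rfl]
  rfl

lemma apolar_add_left (p q r : MvPolynomial (Fin n) ℝ) :
    apolar (p + q) r = apolar p r + apolar q r := by
  rw [apolar, apolar, apolar, map_add]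
  rw [show (((apolarOp p + apolarOp q : PDAlg n)) :
      Module.End ℝ (MvPolynomial (Fin n) ℝ))
    = (apolarOp p : Module.End ℝ (MvPolynomial (Fin n) ℝ)) +
      (apolarOp q : Module.End ℝ (MvPolynomial (Fin n) ℝ)) by push_cast; rfl]
  rfl

lemma apolar_sum_left {ι : Type*} (s : Finset ι) (F : ι → MvPolynomial (Fin n) ℝ)
    (p : MvPolynomial (Fin n) ℝ) :
    apolar (∑ a ∈ s, F a) p = ∑ a ∈ s, apolar (F a) p := by
  rw [apolar, map_sum]
  rw [show ((((∑ a ∈ s, apolarOp (F a)) : PDAlg n)) :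
      Module.End ℝ (MvPolynomial (Fin n) ℝ))
    = ∑ a ∈ s, ((apolarOp (F a) : PDAlg n) :
      Module.End ℝ (MvPolynomial (Fin n) ℝ)) by push_cast; rfl]
  rw [LinearMap.sum_apply]
  rfl

lemma apolar_sum_right {ι : Type*} (s : Finset ι) (q : MvPolynomial (Fin n) ℝ)
    (F : ι → MvPolynomial (Fin n) ℝ) :
    apolar q (∑ a ∈ s, F a) = ∑ a ∈ s, apolar q (F a) := by
  rw [apolar]
  exact map_sum _ _ _

lemma pderiv_compMatrix (M : Matrix (Fin n) (Fin n) ℝ) (j : Fin n)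
    (g : MvPolynomial (Fin n) ℝ) :
    pderiv j (compMatrix M g) = ∑ i, M i j • compMatrix M (pderiv i g) := by
  induction g using MvPolynomial.induction_on with
  | C a => simp [compMatrix]
  | add p q hp hq =>
    simp only [compMatrix] at hp hq ⊢
    simp only [map_add, hp, hq, smul_add, Finset.sum_add_distrib]
  | mul_X p i0 hp =>
    simp only [compMatrix, map_mul, aeval_X] at hp ⊢
    rw [pderiv_mul, hp]
    have h1 : pderiv j (∑ l, C (M i0 l) * X l) = C (M i0 j) := by
      rw [map_sum]
      rw [Finset.sum_eq_single j]
      · simp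
      · intro l _ hl
        classical
        simp [pderiv_X, Pi.single_eq_of_ne hl]
      · simp
    rw [h1]
    have h2 : ∀ i : Fin n,
        M i j • ((aeval fun i => ∑ j, C (M i j) * X j) (pderiv i (p * X i0)))
        = M i j • (((aeval fun i => ∑ j, C (M i j) * X j) (pderiv i p)) *
            (∑ l, C (M i0 l) * X l)) +
          (if i = i0 then M i j • (aeval fun i => ∑ j, C (M i j) * X j) p else 0) := by
      intro i
      rw [pderiv_mul, map_add, map_mul, aeval_X, smul_add]
      congr 1
      classical
      rcases eq_or_ne i i0 with rfl | hne
      · simp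
      · simp [pderiv_X_of_ne (Ne.symm hne), hne]
    rw [Finset.sum_congr rfl fun i _ => h2 i, Finset.sum_add_distrib,
      Finset.sum_ite_eq' Finset.univ i0, if_pos (Finset.mem_univ i0),
      Finset.sum_mul]
    congr 1
    · exact Finset.sum_congr rfl fun i _ => (smul_mul_assoc _ _ _)
    · rw [mul_comm, ← smul_eq_C_mul]

lemma apolar_compMatrix (M : Matrix (Fin n) (Fin n) ℝ)
    (f g : MvPolynomial (Fin n) ℝ) :
    apolar f (compMatrix M g) = compMatrix M (apolar (compMatrix M.transpose f) g) := by
  induction f using MvPolynomial.induction_on generalizing g with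
  | C a =>
    rw [show (compMatrix M.transpose (C a)) = C a by simp [compMatrix]]
    rw [apolar_C, apolar_C]
    simp only [compMatrix, map_smul]
  | add p q hp hq =>
    simp only [compMatrix] at hp hq ⊢
    simp only [map_add, apolar_add_left, hp, hq]
  | mul_X p i0 hp =>
    rw [apolar_mul, apolar_X, pderiv_compMatrix, apolar_sum_right]
    have hlin : ∀ (q : MvPolynomial (Fin n) ℝ) (c : ℝ) (r),
        apolar q (c • r) = c • apolar q r := fun q c r => by
      rw [apolar, map_smul]
      rfl
    rw [Finset.sum_congr rfl fun i _ => hlin p (M i i0) (compMatrix M (pderiv i g))]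
    rw [Finset.sum_congr rfl fun i _ => congrArg (fun z => M i i0 • z) (hp (pderiv i g))]
    rw [show (∑ i, M i i0 • compMatrix M (apolar (compMatrix M.transpose p) (pderiv i g)))
        = compMatrix M (∑ i, M i i0 • apolar (compMatrix M.transpose p) (pderiv i g)) by
      simp only [compMatrix, map_sum, map_smul]]
    congr 1
    have key : (∑ i, M i i0 • apolar (compMatrix M.transpose p) (pderiv i g))
        = apolar (compMatrix M.transpose p) (apolar (compMatrix M.transpose (X i0)) g) := by
      rw [show compMatrix M.transpose (X i0) = ∑ i, C (M i i0) * X i by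
        simp [compMatrix, Matrix.transpose_apply]]
      rw [apolar_sum_left, apolar_sum_right]
      refine Finset.sum_congr rfl fun i _ => ?_
      rw [apolar_mul, apolar_X, apolar_C, hlin]
    rw [key, ← apolar_mul]
    congr 1
    simp only [compMatrix, map_mul]

lemma compMatrix_comp (M N : Matrix (Fin n) (Fin n) ℝ) (f : MvPolynomial (Fin n) ℝ) :
    compMatrix N (compMatrix M f) = compMatrix (M * N) f := by
  induction f using MvPolynomial.induction_on with
  | C a => simp [compMatrix]
  | add p q hp hq => simp only [compMatrix, map_add] at hp hq ⊢; rw [hp, hq]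
  | mul_X p i0 hp =>
    simp only [compMatrix, map_mul, aeval_X] at hp ⊢
    rw [hp]
    congr 1
    simp only [map_sum, map_mul, aeval_C, aeval_X, Matrix.mul_apply, Finset.sum_mul,
      Finset.mul_sum]
    rw [Finset.sum_comm]
    refine Finset.sum_congr rfl fun a _ => Finset.sum_congr rfl fun b _ => ?_
    rw [algebraMap_eq]
    ring

lemma compMatrix_one (f : MvPolynomial (Fin n) ℝ) : compMatrix 1 f = f := by
  have : (fun i => ∑ j, C ((1 : Matrix (Fin n) (Fin n) ℝ) i j) * X j)
      = (X : Fin n → MvPolynomial (Fin n) ℝ) := by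
    funext i
    rw [Finset.sum_eq_single i]
    · simp [Matrix.one_apply_eq]
    · intro j _ hj
      simp [Matrix.one_apply_ne' hj]
    · simp
  rw [compMatrix, this]
  exact aeval_X_left_apply f

lemma constantCoeff_compMatrix (M : Matrix (Fin n) (Fin n) ℝ)
    (f : MvPolynomial (Fin n) ℝ) :
    constantCoeff (compMatrix M f) = constantCoeff f := by
  induction f using MvPolynomial.induction_on with
  | C a => simp [compMatrix]
  | add p q hp hq => simp only [compMatrix, map_add] at hp hq ⊢; rw [hp, hq]
  | mul_X p i0 hp =>
    simp only [compMatrix, map_mul, aeval_X, map_mul] at hp ⊢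
    rw [hp]
    simp

lemma bombieriWeyl_eq_constantCoeff {d : ℕ} (f g : MvPolynomial (Fin n) ℝ)
    (hf : f.IsHomogeneous d) (hg : g.IsHomogeneous d) :
    bombieriWeyl f g = constantCoeff (apolar f g) / (d.factorial : ℝ) := by
  rw [constantCoeff_apolar f g hf hg, bombieriWeyl, Finset.sum_div]
  refine Finset.sum_congr rfl fun α hα => ?_
  have hdeg : Finsupp.degree α = d := by
    rcases Finset.mem_union.mp hα with h | h
    · exact degree_eq_of_mem hf (mem_support_iff.mp h)
    · exact degree_eq_of_mem hg (mem_support_iff.mp h)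
  have hspec := Nat.multinomial_spec α.support α
  have hsum : ∑ i ∈ α.support, α i = d := hdeg
  rw [hsum] at hspec
  have hfact : α.prod (fun _ k => (k.factorial : ℝ))
      = ((∏ i ∈ α.support, (α i).factorial : ℕ) : ℝ) := by
    rw [Nat.cast_prod]
    rfl
  have hmult : α.prod (fun _ k => (k.factorial : ℝ)) * (Nat.multinomial α.support α : ℝ)
      = (d.factorial : ℝ) := by
    rw [hfact]
    exact_mod_cast congrArg (Nat.cast : ℕ → ℝ) hspec
  have hm0 : (Nat.multinomial α.support α : ℝ) ≠ 0 :=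
    Nat.cast_ne_zero.mpr (Nat.multinomial_pos _ _).ne'
  have hd0 : (d.factorial : ℝ) ≠ 0 := Nat.cast_ne_zero.mpr (Nat.factorial_ne_zero d)
  rw [div_eq_div_iff hm0 hd0]
  calc coeff α f * coeff α g * (d.factorial : ℝ)
      = coeff α f * coeff α g * (α.prod (fun _ k => (k.factorial : ℝ))
          * (Nat.multinomial α.support α : ℝ)) := by rw [hmult]
    _ = coeff α f * coeff α g * α.prod (fun _ k => (k.factorial : ℝ))
          * (Nat.multinomial α.support α : ℝ) := by ring

end BWaux

/-- For homogeneous `f, g` of degree `d` and `U` orthogonal,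
`⟨f ∘ U⁻¹, g ∘ U⁻¹⟩ = ⟨f, g⟩` for the Bombieri–Weyl inner product. -/
theorem bombieriWeyl_invariant {n d : ℕ} (f g : MvPolynomial (Fin n) ℝ)
    (hf : f.IsHomogeneous d) (hg : g.IsHomogeneous d)
    (U : Matrix (Fin n) (Fin n) ℝ) (hU : U ∈ Matrix.orthogonalGroup (Fin n) ℝ) :
    bombieriWeyl (compMatrix U⁻¹ f) (compMatrix U⁻¹ g) = bombieriWeyl f g := by
  classical
  have hstar : star U = U.transpose := by
    ext i j
    simp [Matrix.star_apply]
  have hinv : U⁻¹ = U.transpose := by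
    rw [← hstar]
    exact Matrix.inv_eq_right_inv ((Matrix.mem_orthogonalGroup_iff (Fin n) ℝ).mp hU)
  have hM : U⁻¹ * (U⁻¹).transpose = 1 := by
    rw [hinv, Matrix.transpose_transpose]
    have := (Matrix.mem_orthogonalGroup_iff' (Fin n) ℝ).mp hU
    exact this
  have hhom1 : ∀ (N : Matrix (Fin n) (Fin n) ℝ) (i : Fin n),
      (∑ j, C (N i j) * X j : MvPolynomial (Fin n) ℝ).IsHomogeneous 1 := by
    intro N i
    apply MvPolynomial.IsHomogeneous.sum
    intro j _
    exact (isHomogeneous_X ℝ j).C_mul _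
  have hfM : (compMatrix U⁻¹ f).IsHomogeneous d := by
    have := hf.aeval (fun i => ∑ j, C (U⁻¹ i j) * X j) (hhom1 U⁻¹)
    rwa [one_mul] at this
  have hgM : (compMatrix U⁻¹ g).IsHomogeneous d := by
    have := hg.aeval (fun i => ∑ j, C (U⁻¹ i j) * X j) (hhom1 U⁻¹)
    rwa [one_mul] at this
  rw [BWaux.bombieriWeyl_eq_constantCoeff (compMatrix U⁻¹ f) (compMatrix U⁻¹ g) hfM hgM,
    BWaux.bombieriWeyl_eq_constantCoeff f g hf hg]
  congr 1
  rw [BWaux.apolar_compMatrix U⁻¹ (compMatrix U⁻¹ f) g,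
    BWaux.constantCoeff_compMatrix, BWaux.compMatrix_comp, hM, BWaux.compMatrix_one]
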